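/- For the Markov chain on ℤ of the previous context (biased away from 0 with bias 1/(1+e^{-β}) on each half-line, β > 0, started at 0), one has the law of large numbers: X_n/n converges almost surely to a random variable Y with P(Y = (1-e^{-β})/(1+e^{-β})) = P(Y = -(1-e^{-β})/(1+e^{-β})) = 1/2. -/

import Mathlib

open MeasureTheory Filter

/-- Probability of jumping one step to the right from `x`, for the Ant RW on `ℤ`. -/
noncomputable def pUp (β : ℝ) (x : ℤ) : ℝ :=
  if x = 0 then 1/2
  else if 1 ≤ x then 1 / (1 + Real.exp (-β))
  else Real.exp (-β) / (1 + Real.exp (-β))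

/-- Probability of jumping one step to the left from `x`, for the Ant RW on `ℤ`. -/
noncomputable def pDown (β : ℝ) (x : ℤ) : ℝ :=
  if x = 0 then 1/2
  else if 1 ≤ x then Real.exp (-β) / (1 + Real.exp (-β))
  else 1 / (1 + Real.exp (-β))

noncomputable def mUp (β l : ℝ) : ℝ :=
  (Real.exp l + Real.exp (-β) * Real.exp (-l)) / (1 + Real.exp (-β))

noncomputable def mDn (β l : ℝ) : ℝ :=
  (Real.exp (-l) + Real.exp (-β) * Real.exp l) / (1 + Real.exp (-β))

lemma pUp_nonneg (β : ℝ) (x : ℤ) : 0 ≤ pUp β x := by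
  unfold pUp; have : (0:ℝ) < Real.exp (-β) := Real.exp_pos _; split_ifs <;> positivity

lemma pDown_nonneg (β : ℝ) (x : ℤ) : 0 ≤ pDown β x := by
  unfold pDown; have : (0:ℝ) < Real.exp (-β) := Real.exp_pos _; split_ifs <;> positivity

lemma mUp_nonneg (β l : ℝ) : 0 ≤ mUp β l := by unfold mUp; positivity
lemma mDn_nonneg (β l : ℝ) : 0 ≤ mDn β l := by unfold mDn; positivity

lemma mUp_ge_one (β l : ℝ) (hβ : 0 ≤ β) (hl : 0 ≤ l) : 1 ≤ mUp β l := by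
  unfold mUp
  have he : Real.exp (-β) ≤ 1 := Real.exp_le_one_iff.mpr (by linarith)
  have h1 := Real.add_one_le_exp l
  have h2 := Real.add_one_le_exp (-l)
  have h3 := Real.exp_pos (-β)
  rw [le_div_iff₀ (by positivity)]
  nlinarith [Real.exp_pos l, Real.exp_pos (-l)]

lemma coeff_up (β l : ℝ) (hβ : 0 ≤ β) (hl : 0 ≤ l) (x : ℤ) :
    pUp β x * Real.exp (l * |(x:ℝ) + 1|) + pDown β x * Real.exp (l * |(x:ℝ) - 1|)
      ≤ mUp β l * Real.exp (l * |(x:ℝ)|) + (if x = 0 then Real.exp l else 0) := by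
  have he := Real.exp_pos (-β)
  have hne : (0:ℝ) < 1 + Real.exp (-β) := by positivity
  rcases lt_trichotomy x 0 with hx | hx | hx
  · -- x ≤ -1
    have hx1 : x ≤ -1 := by omega
    have ha : (x:ℝ) ≤ -1 := by exact_mod_cast hx1
    rw [if_neg (by omega)]
    unfold pUp pDown mUp
    rw [if_neg (by omega), if_neg (by omega), if_neg (by omega), if_neg (by omega)]
    have h1 : |(x:ℝ) + 1| = -(x:ℝ) - 1 := by rw [abs_of_nonpos (by linarith)]; ring
    have h2 : |(x:ℝ) - 1| = -(x:ℝ) + 1 := by rw [abs_of_nonpos (by linarith)]; ring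
    have h3 : |(x:ℝ)| = -(x:ℝ) := abs_of_nonpos (by linarith)
    rw [h1, h2, h3, add_zero]
    have e1 : l * (-(x:ℝ) - 1) = l * (-(x:ℝ)) + (-l) := by ring
    have e2 : l * (-(x:ℝ) + 1) = l * (-(x:ℝ)) + l := by ring
    rw [e1, e2, Real.exp_add, Real.exp_add]
    apply le_of_eq
    field_simp
    ring
  · -- x = 0
    subst hx
    unfold pUp pDown
    simp only [if_pos rfl, Int.cast_zero, zero_add, zero_sub, abs_one, abs_neg, if_pos]
    have key : (1:ℝ)/2 * Real.exp (l * 1) + 1/2 * Real.exp (l * 1) = Real.exp l := by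
      rw [mul_one]; ring
    rw [key, abs_zero, mul_zero, Real.exp_zero, mul_one]
    have := mUp_nonneg β l
    linarith
  · -- x ≥ 1
    have hx1 : 1 ≤ x := by omega
    have ha : (1:ℝ) ≤ (x:ℝ) := by exact_mod_cast hx1
    rw [if_neg (by omega)]
    unfold pUp pDown mUp
    rw [if_neg (by omega), if_pos (by omega), if_neg (by omega), if_pos (by omega)]
    have h1 : |(x:ℝ) + 1| = (x:ℝ) + 1 := abs_of_nonneg (by linarith)
    have h2 : |(x:ℝ) - 1| = (x:ℝ) - 1 := abs_of_nonneg (by linarith)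
    have h3 : |(x:ℝ)| = (x:ℝ) := abs_of_nonneg (by linarith)
    rw [h1, h2, h3, add_zero]
    have e1 : l * ((x:ℝ) + 1) = l * (x:ℝ) + l := by ring
    have e2 : l * ((x:ℝ) - 1) = l * (x:ℝ) + (-l) := by ring
    rw [e1, e2, Real.exp_add, Real.exp_add]
    apply le_of_eq
    field_simp

lemma coeff_dn (β l : ℝ) (hβ : 0 ≤ β) (hl : 0 ≤ l) (x : ℤ) :
    pUp β x * Real.exp (-(l * |(x:ℝ) + 1|)) + pDown β x * Real.exp (-(l * |(x:ℝ) - 1|))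
      ≤ mDn β l * Real.exp (-(l * |(x:ℝ)|)) := by
  have he := Real.exp_pos (-β)
  have hne : (0:ℝ) < 1 + Real.exp (-β) := by positivity
  rcases lt_trichotomy x 0 with hx | hx | hx
  · have hx1 : x ≤ -1 := by omega
    have ha : (x:ℝ) ≤ -1 := by exact_mod_cast hx1
    unfold pUp pDown mDn
    rw [if_neg (by omega), if_neg (by omega), if_neg (by omega), if_neg (by omega)]
    have h1 : |(x:ℝ) + 1| = -(x:ℝ) - 1 := by rw [abs_of_nonpos (by linarith)]; ring
    have h2 : |(x:ℝ) - 1| = -(x:ℝ) + 1 := by rw [abs_of_nonpos (by linarith)]; ring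
    have h3 : |(x:ℝ)| = -(x:ℝ) := abs_of_nonpos (by linarith)
    rw [h1, h2, h3]
    have e1 : -(l * (-(x:ℝ) - 1)) = -(l * (-(x:ℝ))) + l := by ring
    have e2 : -(l * (-(x:ℝ) + 1)) = -(l * (-(x:ℝ))) + (-l) := by ring
    rw [e1, e2, Real.exp_add, Real.exp_add]
    apply le_of_eq
    field_simp
    ring
  · subst hx
    unfold pUp pDown mDn
    simp only [if_pos rfl, Int.cast_zero, zero_add, zero_sub, abs_one, abs_neg, abs_zero,
      mul_zero, mul_one, neg_zero, Real.exp_zero]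
    have hel : Real.exp (-l) ≤ Real.exp l := Real.exp_le_exp.mpr (by linarith)
    simp only [if_true]; rw [le_div_iff₀ hne]
    nlinarith [Real.exp_pos (-l), Real.exp_pos l]
  · have hx1 : 1 ≤ x := by omega
    have ha : (1:ℝ) ≤ (x:ℝ) := by exact_mod_cast hx1
    unfold pUp pDown mDn
    rw [if_neg (by omega), if_pos (by omega), if_neg (by omega), if_pos (by omega)]
    have h1 : |(x:ℝ) + 1| = (x:ℝ) + 1 := abs_of_nonneg (by linarith)
    have h2 : |(x:ℝ) - 1| = (x:ℝ) - 1 := abs_of_nonneg (by linarith)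
    have h3 : |(x:ℝ)| = (x:ℝ) := abs_of_nonneg (by linarith)
    rw [h1, h2, h3]
    have e1 : -(l * ((x:ℝ) + 1)) = -(l * (x:ℝ)) + (-l) := by ring
    have e2 : -(l * ((x:ℝ) - 1)) = -(l * (x:ℝ)) + l := by ring
    rw [e1, e2, Real.exp_add, Real.exp_add]
    apply le_of_eq
    field_simp

lemma exists_rate {f : ℝ → ℝ} {d : ℝ} (hf : HasDerivAt f d 0)
    (hd : d < 0) (h0 : f 0 = 1) : ∃ l : ℝ, 0 < l ∧ f l < 1 := by
  have hs : Tendsto (slope f 0) (nhdsWithin 0 {(0:ℝ)}ᶜ) (nhds d) :=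
    hasDerivAt_iff_tendsto_slope.mp hf
  have h2 : ∀ᶠ l in nhdsWithin 0 {(0:ℝ)}ᶜ, slope f 0 l < 0 :=
    hs.eventually_lt_const hd
  have h3 : ∀ᶠ l in nhdsWithin 0 (Set.Ioi 0), slope f 0 l < 0 :=
    h2.filter_mono (nhdsWithin_mono 0 (by intro x hx; simpa using (ne_of_gt hx)))
  obtain ⟨l, hl, hmem⟩ := (h3.and self_mem_nhdsWithin).exists
  refine ⟨l, hmem, ?_⟩
  have hl' : (f l - 1) / l < 0 := by
    have := hl; rwa [slope_def_field, h0, sub_zero] at this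
  have hlpos : (0:ℝ) < l := hmem
  rcases div_neg_iff.mp hl' with ⟨h,h'⟩|⟨h,h'⟩ <;> linarith

lemma pUp_neg_int (β : ℝ) (x : ℤ) : pUp β (-x) = pDown β x := by
  unfold pUp pDown
  rcases lt_trichotomy x 0 with h | h | h
  · rw [if_neg (by omega), if_pos (by omega), if_neg (by omega), if_neg (by omega)]
  · simp [h]
  · rw [if_neg (by omega), if_neg (by omega), if_neg (by omega), if_pos (by omega)]

lemma pDown_neg_int (β : ℝ) (x : ℤ) : pDown β (-x) = pUp β x := by
  have := pUp_neg_int β (-x); rwa [neg_neg, eq_comm] at this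

noncomputable def vel (β : ℝ) : ℝ := (1 - Real.exp (-β)) / (1 + Real.exp (-β))

lemma vel_pos {β : ℝ} (hβ : 0 < β) : 0 < vel β := by
  unfold vel
  have h1 : Real.exp (-β) < 1 := Real.exp_lt_one_iff.mpr (by linarith)
  have h2 : (0:ℝ) < 1 + Real.exp (-β) := by positivity
  apply div_pos (by linarith) h2

lemma vel_lt_one {β : ℝ} (hβ : 0 < β) : vel β < 1 := by
  unfold vel
  have h3 := Real.exp_pos (-β)
  rw [div_lt_one (by positivity)]
  linarith

lemma hasDerivAt_mUp (β : ℝ) : HasDerivAt (fun l => mUp β l) (vel β) 0 := by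
  have hb : HasDerivAt (fun l : ℝ => Real.exp (-l)) (-1) 0 := by
    simpa using (hasDerivAt_neg (0:ℝ)).exp
  have h2 : HasDerivAt (fun l : ℝ => Real.exp l + Real.exp (-β) * Real.exp (-l))
      (1 - Real.exp (-β)) 0 := by
    have := (Real.hasDerivAt_exp 0).add (hb.const_mul (Real.exp (-β)))
    simpa [Real.exp_zero, Pi.add_def, ← sub_eq_add_neg] using this
  have h3 := h2.div_const (1 + Real.exp (-β))
  exact h3

lemma hasDerivAt_mDn (β : ℝ) : HasDerivAt (fun l => mDn β l) (-(vel β)) 0 := by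
  have hb : HasDerivAt (fun l : ℝ => Real.exp (-l)) (-1) 0 := by
    simpa using (hasDerivAt_neg (0:ℝ)).exp
  have h2 : HasDerivAt (fun l : ℝ => Real.exp (-l) + Real.exp (-β) * Real.exp l)
      (-1 + Real.exp (-β)) 0 := by
    have := hb.add ((Real.hasDerivAt_exp 0).const_mul (Real.exp (-β)))
    simpa [Real.exp_zero, Pi.add_def] using this
  have h3 := h2.div_const (1 + Real.exp (-β))
  have : (-1 + Real.exp (-β)) / (1 + Real.exp (-β)) = -(vel β) := by
    unfold vel; ring
  rwa [this] at h3

lemma mUp_zero (β : ℝ) : mUp β 0 = 1 := by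
  unfold mUp
  rw [neg_zero, Real.exp_zero, mul_one]
  exact div_self (by positivity)

lemma mDn_zero (β : ℝ) : mDn β 0 = 1 := by
  unfold mDn
  rw [neg_zero, Real.exp_zero, mul_one]
  rw [add_comm]
  exact div_self (by positivity)

lemma rate_up (β ε : ℝ) (hε : 0 < ε) :
    ∃ l : ℝ, 0 < l ∧ mUp β l * Real.exp (-(l * (vel β + ε))) < 1 := by
  have h1 : HasDerivAt (fun l : ℝ => Real.exp ((-(vel β + ε)) * l)) (-(vel β + ε)) 0 := by
    simpa using (((hasDerivAt_id (0:ℝ)).const_mul (-(vel β + ε))).exp)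
  have hf : HasDerivAt (fun l => Real.exp ((-(vel β + ε)) * l) * mUp β l) (-ε) 0 := by
    have := h1.mul (hasDerivAt_mUp β)
    have hval : (-(vel β + ε)) * mUp β 0
        + Real.exp ((-(vel β + ε)) * 0) * vel β = -ε := by
      rw [mUp_zero, mul_zero, Real.exp_zero]; ring
    rwa [hval] at this
  have h0 : Real.exp ((-(vel β + ε)) * 0) * mUp β 0 = 1 := by
    rw [mUp_zero, mul_zero, Real.exp_zero, one_mul]
  obtain ⟨l, hl, hfl⟩ := exists_rate hf (by linarith) h0
  refine ⟨l, hl, ?_⟩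
  calc mUp β l * Real.exp (-(l * (vel β + ε)))
      = Real.exp ((-(vel β + ε)) * l) * mUp β l := by rw [mul_comm]; congr 2; ring
    _ < 1 := hfl

lemma rate_dn (β ε : ℝ) (hε : 0 < ε) :
    ∃ l : ℝ, 0 < l ∧ mDn β l * Real.exp (l * (vel β - ε)) < 1 := by
  have h1 : HasDerivAt (fun l : ℝ => Real.exp ((vel β - ε) * l)) (vel β - ε) 0 := by
    simpa using (((hasDerivAt_id (0:ℝ)).const_mul (vel β - ε)).exp)
  have hf : HasDerivAt (fun l => Real.exp ((vel β - ε) * l) * mDn β l) (-ε) 0 := by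
    have := h1.mul (hasDerivAt_mDn β)
    have hval : (vel β - ε) * mDn β 0
        + Real.exp ((vel β - ε) * 0) * (-(vel β)) = -ε := by
      rw [mDn_zero, mul_zero, Real.exp_zero]; ring
    rwa [hval] at this
  have h0 : Real.exp ((vel β - ε) * 0) * mDn β 0 = 1 := by
    rw [mDn_zero, mul_zero, Real.exp_zero, one_mul]
  obtain ⟨l, hl, hfl⟩ := exists_rate hf (by linarith) h0
  refine ⟨l, hl, ?_⟩
  calc mDn β l * Real.exp (l * (vel β - ε))
      = Real.exp ((vel β - ε) * l) * mDn β l := by rw [mul_comm]; congr 2; ring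
    _ < 1 := hfl

lemma summable_aux (c r : ℝ) (hr0 : 0 ≤ r) (hr : r < 1) :
    Summable (fun n : ℕ => (1 + n * c) * r ^ n) := by
  have h1 : Summable (fun n : ℕ => r ^ n) := summable_geometric_of_lt_one hr0 hr
  have h2 : Summable (fun n : ℕ => (n : ℝ) * r ^ n) := by
    simpa using summable_pow_mul_geometric_of_norm_lt_one 1
      (r := r) (by rwa [Real.norm_eq_abs, abs_of_nonneg hr0])
  exact (h1.add (h2.mul_left c)).congr (fun n => by ring)

section
variable {Ω : Type*} [MeasurableSpace Ω] (P : Measure Ω) [IsProbabilityMeasure P]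
    (β : ℝ) (X : ℕ → Ω → ℤ)

omit [MeasurableSpace Ω] in
lemma measSup (n i : ℕ) (hi : i < n + 1) (s : Set ℤ) :
    MeasurableSet[⨆ i : Fin (n+1), MeasurableSpace.comap (X i.val) inferInstance]
      (X i ⁻¹' s) := by
  have h1 : MeasurableSet[MeasurableSpace.comap (X i) inferInstance] (X i ⁻¹' s) :=
    ⟨s, MeasurableSet.of_discrete, rfl⟩
  exact le_iSup (fun j : Fin (n+1) => MeasurableSpace.comap (X j.val) inferInstance)
    (⟨i, hi⟩ : Fin (n+1)) _ h1

variable (hXmeas : ∀ n, Measurable (X n))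
    (hstep : ∀ n, ∀ᵐ ω ∂P, X (n+1) ω = X n ω + 1 ∨ X (n+1) ω = X n ω - 1)
    (hMarkov : ∀ (n : ℕ) (x : ℤ) (A : Set Ω),
      MeasurableSet[⨆ i : Fin (n+1), MeasurableSpace.comap (X i.val) inferInstance] A →
      A ⊆ {ω | X n ω = x} →
      P (A ∩ {ω | X (n+1) ω = x + 1}) = ENNReal.ofReal (pUp β x) * P A ∧
      P (A ∩ {ω | X (n+1) ω = x - 1}) = ENNReal.ofReal (pDown β x) * P A)

set_option linter.unusedSectionVars false

include hXmeas hstep hMarkov in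
lemma lint_step (n : ℕ) (g : ℤ → ENNReal) :
    ∫⁻ ω, g (X (n+1) ω) ∂P
      = ∑' x : ℤ, (ENNReal.ofReal (pUp β x) * g (x+1)
          + ENNReal.ofReal (pDown β x) * g (x-1)) * P {ω | X n ω = x} := by
  have hA : ∀ x : ℤ, MeasurableSet {ω | X n ω = x} := fun x =>
    hXmeas n (MeasurableSet.of_discrete (s := {x}))
  have hU : (Set.univ : Set Ω) = ⋃ x : ℤ, {ω | X n ω = x} := by
    ext ω; simp
  have hdisj : Pairwise (Function.onFun Disjoint fun x : ℤ => {ω | X n ω = x}) := by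
    intro a b hab
    simp only [Function.onFun, Set.disjoint_left]
    intro ω ha hb; exact hab (ha.symm.trans hb)
  calc ∫⁻ ω, g (X (n+1) ω) ∂P
      = ∫⁻ ω in ⋃ x : ℤ, {ω | X n ω = x}, g (X (n+1) ω) ∂P := by
        rw [← hU, setLIntegral_univ]
    _ = ∑' x : ℤ, ∫⁻ ω in {ω | X n ω = x}, g (X (n+1) ω) ∂P :=
        lintegral_iUnion hA hdisj _
    _ = _ := by
        congr 1; ext x
        set A := {ω | X n ω = x} with hAdef
        set U := A ∩ {ω | X (n+1) ω = x + 1} with hUdef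
        set D := A ∩ {ω | X (n+1) ω = x - 1} with hDdef
        have hmU : MeasurableSet U :=
          (hA x).inter (hXmeas (n+1) (MeasurableSet.of_discrete (s := {x+1})))
        have hmD : MeasurableSet D :=
          (hA x).inter (hXmeas (n+1) (MeasurableSet.of_discrete (s := {x-1})))
        have hdUD : Disjoint U D := by
          rw [Set.disjoint_left]; rintro ω ⟨_, h1⟩ ⟨_, h2⟩
          simp only [Set.mem_setOf_eq] at h1 h2; omega
        have hAae : A =ᶠ[ae P] (U ∪ D : Set Ω) := by
          rw [eventuallyEq_set]
          filter_upwards [hstep n] with ω hω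
          constructor
          · intro hx
            have hx' : X n ω = x := hx
            rcases hω with h | h
            · exact Or.inl ⟨hx, by simp only [Set.mem_setOf_eq, h, hx']⟩
            · exact Or.inr ⟨hx, by simp only [Set.mem_setOf_eq, h, hx']⟩
          · rintro (⟨h, _⟩ | ⟨h, _⟩) <;> exact h
        have hmk := hMarkov n x A (measSup X n n (by omega) {x}) (by intro ω h; exact h)
        calc ∫⁻ ω in A, g (X (n+1) ω) ∂P
            = ∫⁻ ω in U ∪ D, g (X (n+1) ω) ∂P := setLIntegral_congr hAae
          _ = (∫⁻ ω in U, g (X (n+1) ω) ∂P) + ∫⁻ ω in D, g (X (n+1) ω) ∂P :=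
              lintegral_union hmD hdUD
          _ = g (x+1) * P U + g (x-1) * P D := by
              congr 1
              · rw [setLIntegral_congr_fun hmU (fun ω hω => by rw [hω.2]),
                  setLIntegral_const]
              · rw [setLIntegral_congr_fun hmD (fun ω hω => by rw [hω.2]),
                  setLIntegral_const]
          _ = _ := by rw [hmk.1, hmk.2]; ring

include hXmeas in
lemma lint_eval (n : ℕ) (g : ℤ → ENNReal) :
    ∫⁻ ω, g (X n ω) ∂P = ∑' x : ℤ, g x * P {ω | X n ω = x} := by
  rw [← lintegral_map (f := g) (measurable_from_top) (hXmeas n), lintegral_countable']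
  congr 1; ext y
  rw [Measure.map_apply (hXmeas n) MeasurableSet.of_discrete]
  rfl

include hXmeas hstep hMarkov in
lemma moment_up (hβ : 0 ≤ β) (hX0 : ∀ ω, X 0 ω = 0) (l : ℝ) (hl : 0 ≤ l) (n : ℕ) :
    ∫⁻ ω, ENNReal.ofReal (Real.exp (l * |(X n ω : ℝ)|)) ∂P
      ≤ ENNReal.ofReal ((1 + n * Real.exp l) * mUp β l ^ n) := by
  induction n with
  | zero =>
      simp only [hX0, Int.cast_zero, abs_zero, mul_zero, Real.exp_zero, Nat.cast_zero,
        zero_mul, add_zero, pow_zero, mul_one, ENNReal.ofReal_one, lintegral_const,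
        measure_univ, mul_one, le_refl]
  | succ n ih =>
      set g : ℤ → ENNReal := fun z => ENNReal.ofReal (Real.exp (l * |(z:ℝ)|)) with hg
      have hrec := lint_step P β X hXmeas hstep hMarkov n g
      have hper : ∀ x : ℤ,
          (ENNReal.ofReal (pUp β x) * g (x+1) + ENNReal.ofReal (pDown β x) * g (x-1))
            ≤ ENNReal.ofReal (mUp β l) * g x
              + (if x = 0 then ENNReal.ofReal (Real.exp l) else 0) := by
        intro x
        have hc1 : ((x + 1 : ℤ) : ℝ) = (x:ℝ) + 1 := by push_cast; ring
        have hc2 : ((x - 1 : ℤ) : ℝ) = (x:ℝ) - 1 := by push_cast; ring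
        have e1 : g (x+1) = ENNReal.ofReal (Real.exp (l * |(x:ℝ) + 1|)) := by
          simp only [hg, hc1]
        have e2 : g (x-1) = ENNReal.ofReal (Real.exp (l * |(x:ℝ) - 1|)) := by
          simp only [hg, hc2]
        rw [e1, e2, ← ENNReal.ofReal_mul (pUp_nonneg β x),
          ← ENNReal.ofReal_mul (pDown_nonneg β x),
          ← ENNReal.ofReal_add (mul_nonneg (pUp_nonneg β x) (Real.exp_pos _).le)
            (mul_nonneg (pDown_nonneg β x) (Real.exp_pos _).le)]
        have := coeff_up β l hβ hl x
        calc ENNReal.ofReal (pUp β x * Real.exp (l * |(x:ℝ) + 1|)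
              + pDown β x * Real.exp (l * |(x:ℝ) - 1|))
            ≤ ENNReal.ofReal (mUp β l * Real.exp (l * |(x:ℝ)|)
              + (if x = 0 then Real.exp l else 0)) := ENNReal.ofReal_le_ofReal this
          _ = _ := by
              rw [ENNReal.ofReal_add (mul_nonneg (mUp_nonneg β l) (Real.exp_pos _).le)
                  (by split_ifs <;> simp [Real.exp_pos _ |>.le]),
                ENNReal.ofReal_mul (mUp_nonneg β l)]
              congr 1
              split_ifs <;> simp
      calc ∫⁻ ω, g (X (n+1) ω) ∂P
          = ∑' x : ℤ, (ENNReal.ofReal (pUp β x) * g (x+1)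
              + ENNReal.ofReal (pDown β x) * g (x-1)) * P {ω | X n ω = x} := hrec
        _ ≤ ∑' x : ℤ, (ENNReal.ofReal (mUp β l) * g x
              + (if x = 0 then ENNReal.ofReal (Real.exp l) else 0)) * P {ω | X n ω = x} :=
            ENNReal.tsum_le_tsum (fun x => mul_le_mul_left (hper x) _)
        _ = (∑' x : ℤ, ENNReal.ofReal (mUp β l) * (g x * P {ω | X n ω = x}))
              + ∑' x : ℤ,
                (if x = 0 then ENNReal.ofReal (Real.exp l) else 0) * P {ω | X n ω = x} := by
            rw [← ENNReal.tsum_add]; congr 1; ext x; ring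
        _ ≤ ENNReal.ofReal (mUp β l) * (∫⁻ ω, g (X n ω) ∂P) + ENNReal.ofReal (Real.exp l) := by
            gcongr
            · rw [ENNReal.tsum_mul_left, lint_eval P X hXmeas n g]
            · rw [tsum_eq_single (0:ℤ) (by intro x hx; rw [if_neg hx, zero_mul])]
              rw [if_pos rfl]
              calc ENNReal.ofReal (Real.exp l) * P {ω | X n ω = 0}
                  ≤ ENNReal.ofReal (Real.exp l) * 1 := by
                    gcongr; exact prob_le_one
                _ = ENNReal.ofReal (Real.exp l) := mul_one _
        _ ≤ ENNReal.ofReal (mUp β l) * ENNReal.ofReal ((1 + n * Real.exp l) * mUp β l ^ n)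
              + ENNReal.ofReal (Real.exp l) := by gcongr
        _ ≤ ENNReal.ofReal ((1 + (n+1 : ℕ) * Real.exp l) * mUp β l ^ (n+1)) := by
            rw [← ENNReal.ofReal_mul (mUp_nonneg β l),
              ← ENNReal.ofReal_add (mul_nonneg (mUp_nonneg β l)
                (mul_nonneg (by positivity) (pow_nonneg (mUp_nonneg β l) n)))
                (Real.exp_pos _).le]
            apply ENNReal.ofReal_le_ofReal
            have hM := mUp_ge_one β l hβ hl
            have hMp : (1:ℝ) ≤ mUp β l ^ (n+1) := one_le_pow₀ hM
            have hA := Real.exp_pos l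
            have hexp : mUp β l * ((1 + (n:ℝ) * Real.exp l) * mUp β l ^ n)
                = (1 + (n:ℝ) * Real.exp l) * mUp β l ^ (n+1) := by ring
            have key : Real.exp l ≤ Real.exp l * mUp β l ^ (n+1) :=
              le_mul_of_one_le_right hA.le hMp
            push_cast
            nlinarith [key]

include hXmeas hstep hMarkov in
lemma moment_dn (hβ : 0 ≤ β) (hX0 : ∀ ω, X 0 ω = 0) (l : ℝ) (hl : 0 ≤ l) (n : ℕ) :
    ∫⁻ ω, ENNReal.ofReal (Real.exp (-(l * |(X n ω : ℝ)|))) ∂P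
      ≤ ENNReal.ofReal (mDn β l ^ n) := by
  induction n with
  | zero =>
      simp only [hX0, Int.cast_zero, abs_zero, mul_zero, neg_zero, Real.exp_zero,
        pow_zero, ENNReal.ofReal_one, lintegral_const, measure_univ, mul_one, le_refl]
  | succ n ih =>
      set g : ℤ → ENNReal := fun z => ENNReal.ofReal (Real.exp (-(l * |(z:ℝ)|))) with hg
      have hrec := lint_step P β X hXmeas hstep hMarkov n g
      have hper : ∀ x : ℤ,
          (ENNReal.ofReal (pUp β x) * g (x+1) + ENNReal.ofReal (pDown β x) * g (x-1))
            ≤ ENNReal.ofReal (mDn β l) * g x := by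
        intro x
        have hc1 : ((x + 1 : ℤ) : ℝ) = (x:ℝ) + 1 := by push_cast; ring
        have hc2 : ((x - 1 : ℤ) : ℝ) = (x:ℝ) - 1 := by push_cast; ring
        have e1 : g (x+1) = ENNReal.ofReal (Real.exp (-(l * |(x:ℝ) + 1|))) := by
          simp only [hg, hc1]
        have e2 : g (x-1) = ENNReal.ofReal (Real.exp (-(l * |(x:ℝ) - 1|))) := by
          simp only [hg, hc2]
        rw [e1, e2, ← ENNReal.ofReal_mul (pUp_nonneg β x),
          ← ENNReal.ofReal_mul (pDown_nonneg β x),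
          ← ENNReal.ofReal_add (mul_nonneg (pUp_nonneg β x) (Real.exp_pos _).le)
            (mul_nonneg (pDown_nonneg β x) (Real.exp_pos _).le),
          ← ENNReal.ofReal_mul (mDn_nonneg β l)]
        exact ENNReal.ofReal_le_ofReal (coeff_dn β l hβ hl x)
      calc ∫⁻ ω, g (X (n+1) ω) ∂P
          = ∑' x : ℤ, (ENNReal.ofReal (pUp β x) * g (x+1)
              + ENNReal.ofReal (pDown β x) * g (x-1)) * P {ω | X n ω = x} := hrec
        _ ≤ ∑' x : ℤ, ENNReal.ofReal (mDn β l) * (g x * P {ω | X n ω = x}) := by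
            refine ENNReal.tsum_le_tsum (fun x => ?_)
            rw [← mul_assoc]
            exact mul_le_mul_left (hper x) _
        _ = ENNReal.ofReal (mDn β l) * ∫⁻ ω, g (X n ω) ∂P := by
            rw [ENNReal.tsum_mul_left, lint_eval P X hXmeas n g]
        _ ≤ ENNReal.ofReal (mDn β l) * ENNReal.ofReal (mDn β l ^ n) := by gcongr
        _ = ENNReal.ofReal (mDn β l ^ (n+1)) := by
            rw [← ENNReal.ofReal_mul (mDn_nonneg β l), pow_succ, mul_comm]

include hXmeas hstep hMarkov in
lemma dev_up (hβ : 0 ≤ β) (hX0 : ∀ ω, X 0 ω = 0) (l : ℝ) (hl : 0 ≤ l) (b : ℝ) (n : ℕ) :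
    P {ω | b * n ≤ |(X n ω : ℝ)|}
      ≤ ENNReal.ofReal ((1 + n * Real.exp l) * (mUp β l * Real.exp (-(l * b))) ^ n) := by
  have hfm : AEMeasurable (fun ω => ENNReal.ofReal (Real.exp (l * |(X n ω : ℝ)|))) P := by
    exact ((measurable_from_top (f := fun z : ℤ => ENNReal.ofReal
      (Real.exp (l * |(z : ℝ)|)))).comp (hXmeas n)).aemeasurable
  set ε : ENNReal := ENNReal.ofReal (Real.exp (l * (b * n))) with hε
  have hsub : {ω | b * n ≤ |(X n ω : ℝ)|}
      ⊆ {ω | ε ≤ ENNReal.ofReal (Real.exp (l * |(X n ω : ℝ)|))} := by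
    intro ω hω
    simp only [Set.mem_setOf_eq] at hω ⊢
    exact ENNReal.ofReal_le_ofReal (Real.exp_le_exp.mpr
      (mul_le_mul_of_nonneg_left hω hl))
  have h1 := mul_meas_ge_le_lintegral₀ hfm ε
  have h2 : ε * P {ω | b * n ≤ |(X n ω : ℝ)|}
      ≤ ENNReal.ofReal ((1 + n * Real.exp l) * mUp β l ^ n) :=
    le_trans (mul_le_mul_right (measure_mono hsub) ε)
      (le_trans h1 (moment_up P β X hXmeas hstep hMarkov hβ hX0 l hl n))
  have hεne : ε ≠ 0 := by
    simp only [hε, ne_eq, ENNReal.ofReal_eq_zero, not_le]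
    exact Real.exp_pos _
  have h3 : P {ω | b * n ≤ |(X n ω : ℝ)|}
      ≤ ENNReal.ofReal ((1 + n * Real.exp l) * mUp β l ^ n) / ε := by
    rw [ENNReal.le_div_iff_mul_le (Or.inl hεne) (Or.inl ENNReal.ofReal_ne_top)]
    rwa [mul_comm]
  refine le_trans h3 (le_of_eq ?_)
  rw [hε, ← ENNReal.ofReal_div_of_pos (Real.exp_pos _)]
  congr 1
  rw [mul_pow]
  have hx : Real.exp (-(l*b)) ^ n = (Real.exp (l * (b * n)))⁻¹ := by
    rw [← Real.exp_nat_mul, ← Real.exp_neg]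
    congr 1; push_cast; ring
  rw [hx, div_eq_mul_inv]
  ring

include hXmeas hstep hMarkov in
lemma dev_dn (hβ : 0 ≤ β) (hX0 : ∀ ω, X 0 ω = 0) (l : ℝ) (hl : 0 ≤ l) (b : ℝ) (n : ℕ) :
    P {ω | |(X n ω : ℝ)| ≤ b * n}
      ≤ ENNReal.ofReal ((mDn β l * Real.exp (l * b)) ^ n) := by
  have hfm : AEMeasurable (fun ω => ENNReal.ofReal (Real.exp (-(l * |(X n ω : ℝ)|)))) P := by
    exact ((measurable_from_top (f := fun z : ℤ => ENNReal.ofReal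
      (Real.exp (-(l * |(z : ℝ)|))))).comp (hXmeas n)).aemeasurable
  set ε : ENNReal := ENNReal.ofReal (Real.exp (-(l * (b * n)))) with hε
  have hsub : {ω | |(X n ω : ℝ)| ≤ b * n}
      ⊆ {ω | ε ≤ ENNReal.ofReal (Real.exp (-(l * |(X n ω : ℝ)|)))} := by
    intro ω hω
    simp only [Set.mem_setOf_eq] at hω ⊢
    exact ENNReal.ofReal_le_ofReal (Real.exp_le_exp.mpr
      (neg_le_neg (mul_le_mul_of_nonneg_left hω hl)))
  have h1 := mul_meas_ge_le_lintegral₀ hfm ε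
  have h2 : ε * P {ω | |(X n ω : ℝ)| ≤ b * n} ≤ ENNReal.ofReal (mDn β l ^ n) :=
    le_trans (mul_le_mul_right (measure_mono hsub) ε)
      (le_trans h1 (moment_dn P β X hXmeas hstep hMarkov hβ hX0 l hl n))
  have hεne : ε ≠ 0 := by
    simp only [hε, ne_eq, ENNReal.ofReal_eq_zero, not_le]
    exact Real.exp_pos _
  have h3 : P {ω | |(X n ω : ℝ)| ≤ b * n} ≤ ENNReal.ofReal (mDn β l ^ n) / ε := by
    rw [ENNReal.le_div_iff_mul_le (Or.inl hεne) (Or.inl ENNReal.ofReal_ne_top)]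
    rwa [mul_comm]
  refine le_trans h3 (le_of_eq ?_)
  rw [hε, ← ENNReal.ofReal_div_of_pos (Real.exp_pos _)]
  congr 1
  rw [mul_pow]
  have hx : Real.exp (l * b) ^ n = (Real.exp (-(l * (b * n))))⁻¹ := by
    rw [← Real.exp_nat_mul, ← Real.exp_neg, neg_neg]
    congr 1; push_cast; ring
  rw [hx, div_eq_mul_inv]

include hXmeas hstep hMarkov in
lemma dev_ae (hβ : 0 < β) (hX0 : ∀ ω, X 0 ω = 0) (ε : ℝ) (hε : 0 < ε) :
    ∀ᵐ ω ∂P, ∀ᶠ n : ℕ in atTop,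
      |(X n ω : ℝ)| < (vel β + ε) * n ∧ (vel β - ε) * n < |(X n ω : ℝ)| := by
  obtain ⟨l1, hl1, hr1⟩ := rate_up β ε hε
  obtain ⟨l2, hl2, hr2⟩ := rate_dn β ε hε
  set r1 : ℝ := mUp β l1 * Real.exp (-(l1 * (vel β + ε))) with hr1def
  set r2 : ℝ := mDn β l2 * Real.exp (l2 * (vel β - ε)) with hr2def
  have hr10 : 0 ≤ r1 := mul_nonneg (mUp_nonneg β l1) (Real.exp_pos _).le
  have hr20 : 0 ≤ r2 := mul_nonneg (mDn_nonneg β l2) (Real.exp_pos _).le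
  -- upper deviations
  have hsum1 : (∑' n : ℕ, P {ω | (vel β + ε) * n ≤ |(X n ω : ℝ)|}) ≠ ⊤ := by
    have hb : ∀ n : ℕ, P {ω | (vel β + ε) * n ≤ |(X n ω : ℝ)|}
        ≤ ENNReal.ofReal ((1 + n * Real.exp l1) * r1 ^ n) :=
      fun n => dev_up P β X hXmeas hstep hMarkov hβ.le hX0 l1 hl1.le (vel β + ε) n
    have hS : Summable (fun n : ℕ => (1 + n * Real.exp l1) * r1 ^ n) :=
      summable_aux _ _ hr10 hr1
    have hnn : ∀ n : ℕ, 0 ≤ (1 + n * Real.exp l1) * r1 ^ n := fun n => by positivity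
    apply ne_top_of_le_ne_top (b := ENNReal.ofReal (∑' n : ℕ, (1 + n * Real.exp l1) * r1 ^ n))
      ENNReal.ofReal_ne_top
    calc ∑' n : ℕ, P {ω | (vel β + ε) * n ≤ |(X n ω : ℝ)|}
        ≤ ∑' n : ℕ, ENNReal.ofReal ((1 + n * Real.exp l1) * r1 ^ n) :=
          ENNReal.tsum_le_tsum hb
      _ = ENNReal.ofReal (∑' n : ℕ, (1 + n * Real.exp l1) * r1 ^ n) :=
          (ENNReal.ofReal_tsum_of_nonneg hnn hS).symm
  have hae1 := ae_eventually_notMem hsum1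
  -- lower deviations
  have hsum2 : (∑' n : ℕ, P {ω | |(X n ω : ℝ)| ≤ (vel β - ε) * n}) ≠ ⊤ := by
    have hb : ∀ n : ℕ, P {ω | |(X n ω : ℝ)| ≤ (vel β - ε) * n}
        ≤ ENNReal.ofReal (r2 ^ n) :=
      fun n => dev_dn P β X hXmeas hstep hMarkov hβ.le hX0 l2 hl2.le (vel β - ε) n
    have hS : Summable (fun n : ℕ => r2 ^ n) := summable_geometric_of_lt_one hr20 hr2
    have hnn : ∀ n : ℕ, 0 ≤ r2 ^ n := fun n => by positivity
    apply ne_top_of_le_ne_top (b := ENNReal.ofReal (∑' n : ℕ, r2 ^ n)) ENNReal.ofReal_ne_top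
    calc ∑' n : ℕ, P {ω | |(X n ω : ℝ)| ≤ (vel β - ε) * n}
        ≤ ∑' n : ℕ, ENNReal.ofReal (r2 ^ n) := ENNReal.tsum_le_tsum hb
      _ = ENNReal.ofReal (∑' n : ℕ, r2 ^ n) :=
          (ENNReal.ofReal_tsum_of_nonneg hnn hS).symm
  have hae2 := ae_eventually_notMem hsum2
  filter_upwards [hae1, hae2] with ω h1 h2
  filter_upwards [h1, h2] with n hn1 hn2
  constructor
  · simpa using (not_le.mp hn1)
  · simpa using (not_le.mp hn2)

include hXmeas hstep hMarkov in
lemma abs_tendsto (hβ : 0 < β) (hX0 : ∀ ω, X 0 ω = 0) :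
    ∀ᵐ ω ∂P, Tendsto (fun n : ℕ => |(X n ω : ℝ)| / n) atTop (nhds (vel β)) := by
  have hall : ∀ᵐ ω ∂P, ∀ k : ℕ, ∀ᶠ n : ℕ in atTop,
      |(X n ω:ℝ)| < (vel β + 1/(k+1)) * n ∧ (vel β - 1/(k+1)) * n < |(X n ω:ℝ)| :=
    (ae_all_iff).mpr (fun k => dev_ae P β X hXmeas hstep hMarkov hβ hX0 (1/(k+1))
      (by positivity))
  filter_upwards [hall] with ω hω
  rw [Metric.tendsto_atTop]
  intro ε hε
  obtain ⟨k, hk⟩ := exists_nat_one_div_lt hε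
  obtain ⟨N, hN⟩ := eventually_atTop.mp (hω k)
  refine ⟨max N 1, fun n hn => ?_⟩
  have hn1 : 1 ≤ n := le_trans (le_max_right _ _) hn
  obtain ⟨h1, h2⟩ := hN n (le_trans (le_max_left _ _) hn)
  have hnp : (0:ℝ) < n := by exact_mod_cast hn1
  rw [Real.dist_eq, abs_lt]
  have hd1 : |(X n ω:ℝ)| / n < vel β + 1/(k+1) := by
    rw [div_lt_iff₀ hnp]; linarith
  have hd2 : vel β - 1/(k+1) < |(X n ω:ℝ)| / n := by
    rw [lt_div_iff₀ hnp]; linarith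
  constructor <;> [linarith; linarith]

include hXmeas hstep hMarkov in
lemma cyl_symm (hX0 : ∀ ω, X 0 ω = 0) (x : ℕ → ℤ) (n : ℕ) :
    P {ω | ∀ i ≤ n, X i ω = x i} = P {ω | ∀ i ≤ n, X i ω = -(x i)} := by
  induction n with
  | zero =>
    have e1 : {ω : Ω | ∀ i ≤ 0, X i ω = x i} = {ω : Ω | X 0 ω = x 0} := by
      ext ω; simp [Nat.le_zero]
    have e2 : {ω : Ω | ∀ i ≤ 0, X i ω = -(x i)} = {ω : Ω | X 0 ω = -(x 0)} := by
      ext ω; simp [Nat.le_zero]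
    rw [e1, e2]
    by_cases h : x 0 = 0
    · have : ∀ y : ℤ, y = 0 → {ω : Ω | X 0 ω = y} = Set.univ := by
        intro y hy; ext ω; simp [hX0 ω, hy]
      rw [this _ h, this _ (by omega)]
    · have : ∀ y : ℤ, y ≠ 0 → {ω : Ω | X 0 ω = y} = ∅ := by
        intro y hy; ext ω; simp [hX0 ω]; omega
      rw [this _ h, this _ (by omega)]
  | succ n ih =>
    set A := {ω : Ω | ∀ i ≤ n, X i ω = x i} with hA
    set A' := {ω : Ω | ∀ i ≤ n, X i ω = -(x i)} with hA'
    have esucc : ∀ y : ℕ → ℤ, {ω : Ω | ∀ i ≤ n+1, X i ω = y i}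
        = {ω : Ω | ∀ i ≤ n, X i ω = y i} ∩ {ω : Ω | X (n+1) ω = y (n+1)} := by
      intro y; ext ω
      simp only [Set.mem_setOf_eq, Set.mem_inter_iff]
      constructor
      · intro h; exact ⟨fun i hi => h i (by omega), h (n+1) le_rfl⟩
      · rintro ⟨h1, h2⟩ i hi
        by_cases hin : i ≤ n
        · exact h1 i hin
        · have : i = n+1 := by omega
          rw [this]; exact h2
    have hAmeas : MeasurableSet[⨆ i : Fin (n+1),
        MeasurableSpace.comap (X i.val) inferInstance] A := by
      have hrep : A = ⋂ i : Fin (n+1), (X i.val) ⁻¹' {x i.val} := by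
        ext ω
        simp only [Set.mem_iInter, Set.mem_preimage, Set.mem_singleton_iff, hA,
          Set.mem_setOf_eq]
        constructor
        · intro h i; exact h i.val (by omega)
        · intro h i hi; exact h ⟨i, by omega⟩
      rw [hrep]
      exact MeasurableSet.iInter (fun i => measSup X n i.val i.isLt {x i.val})
    have hA'meas : MeasurableSet[⨆ i : Fin (n+1),
        MeasurableSpace.comap (X i.val) inferInstance] A' := by
      have hrep : A' = ⋂ i : Fin (n+1), (X i.val) ⁻¹' {-(x i.val)} := by
        ext ω
        simp only [Set.mem_iInter, Set.mem_preimage, Set.mem_singleton_iff, hA',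
          Set.mem_setOf_eq]
        constructor
        · intro h i; exact h i.val (by omega)
        · intro h i hi; exact h ⟨i, by omega⟩
      rw [hrep]
      exact MeasurableSet.iInter (fun i => measSup X n i.val i.isLt {-(x i.val)})
    have hsubA : A ⊆ {ω | X n ω = x n} := fun ω h => h n le_rfl
    have hsubA' : A' ⊆ {ω | X n ω = -(x n)} := fun ω h => h n le_rfl
    rw [esucc x, esucc (fun i => -(x i))]
    by_cases hc1 : x (n+1) = x n + 1
    · have h1 := (hMarkov n (x n) A hAmeas hsubA).1
      have h2 := (hMarkov n (-(x n)) A' hA'meas hsubA').2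
      have e1 : {ω : Ω | X (n+1) ω = x (n+1)} = {ω : Ω | X (n+1) ω = x n + 1} := by
        rw [hc1]
      have e2 : {ω : Ω | X (n+1) ω = (fun i => -(x i)) (n+1)}
          = {ω : Ω | X (n+1) ω = -(x n) - 1} := by
        have : -(x (n+1)) = -(x n) - 1 := by omega
        simp only [this]
      rw [e1, e2, h1, h2, pDown_neg_int, ih]
    · by_cases hc2 : x (n+1) = x n - 1
      · have h1 := (hMarkov n (x n) A hAmeas hsubA).2
        have h2 := (hMarkov n (-(x n)) A' hA'meas hsubA').1
        have e1 : {ω : Ω | X (n+1) ω = x (n+1)} = {ω : Ω | X (n+1) ω = x n - 1} := by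
          rw [hc2]
        have e2 : {ω : Ω | X (n+1) ω = (fun i => -(x i)) (n+1)}
            = {ω : Ω | X (n+1) ω = -(x n) + 1} := by
          have : -(x (n+1)) = -(x n) + 1 := by omega
          simp only [this]
        rw [e1, e2, h1]
        have h2' : P (A' ∩ {ω | X (n+1) ω = -(x n) + 1})
            = ENNReal.ofReal (pUp β (-(x n))) * P A' := h2
        rw [h2', pUp_neg_int, ih]
      · have hbad : P {ω : Ω | ¬(X (n+1) ω = X n ω + 1 ∨ X (n+1) ω = X n ω - 1)} = 0 := by
          have := hstep n; rwa [ae_iff] at this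
        have z1 : P (A ∩ {ω : Ω | X (n+1) ω = x (n+1)}) = 0 := by
          refine measure_mono_null ?_ hbad
          rintro ω ⟨hω1, hω2⟩
          have hxn : X n ω = x n := hω1 n le_rfl
          have hx1 : X (n+1) ω = x (n+1) := hω2
          simp only [Set.mem_setOf_eq, hxn, hx1]
          omega
        have z2 : P (A' ∩ {ω : Ω | X (n+1) ω = (fun i => -(x i)) (n+1)}) = 0 := by
          refine measure_mono_null ?_ hbad
          rintro ω ⟨hω1, hω2⟩
          have hxn : X n ω = -(x n) := hω1 n le_rfl
          have hx1 : X (n+1) ω = -(x (n+1)) := hω2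
          simp only [Set.mem_setOf_eq, hxn, hx1]
          omega
        rw [z1, z2]

include hXmeas hstep hMarkov in
lemma event_symm (hX0 : ∀ ω, X 0 ω = 0) (N M : ℕ) :
    P {ω | ∀ n, N ≤ n → n ≤ M → 1 ≤ X n ω}
      = P {ω | ∀ n, N ≤ n → n ≤ M → X n ω ≤ -1} := by
  classical
  set cylSet : (Fin (M+1) → ℤ) → Set Ω := fun c => {ω | ∀ i : Fin (M+1), X i ω = c i}
    with hcyl
  have hcylMeas : ∀ c, MeasurableSet (cylSet c) := by
    intro c
    have hrep : cylSet c = ⋂ i : Fin (M+1), (X i) ⁻¹' {c i} := by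
      ext ω; simp [hcyl]
    rw [hrep]
    exact MeasurableSet.iInter (fun i => hXmeas i (MeasurableSet.of_discrete))
  have hcs : ∀ c : Fin (M+1) → ℤ, P (cylSet c) = P (cylSet (fun i => -(c i))) := by
    intro c
    set xp : ℕ → ℤ := fun i => if h : i < M+1 then c ⟨i, h⟩ else 0 with hxp
    have e1 : cylSet c = {ω | ∀ i ≤ M, X i ω = xp i} := by
      ext ω
      simp only [hcyl, Set.mem_setOf_eq]
      constructor
      · intro h i hi
        have hlt : i < M + 1 := by omega
        rw [hxp]; simp only [dif_pos hlt]
        exact h ⟨i, hlt⟩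
      · intro h i
        have := h i.val (by omega)
        rw [hxp] at this; simpa only [dif_pos i.isLt] using this
    have e2 : cylSet (fun i => -(c i)) = {ω | ∀ i ≤ M, X i ω = -(xp i)} := by
      ext ω
      simp only [hcyl, Set.mem_setOf_eq]
      constructor
      · intro h i hi
        have hlt : i < M + 1 := by omega
        rw [hxp]; simp only [dif_pos hlt]
        exact h ⟨i, hlt⟩
      · intro h i
        have := h i.val (by omega)
        rw [hxp] at this; simpa only [dif_pos i.isLt] using this
    rw [e1, e2]
    exact cyl_symm P β X hXmeas hstep hMarkov hX0 xp M
  have hdecomp : ∀ (s : ℤ → Prop),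
      {ω | ∀ n, N ≤ n → n ≤ M → s (X n ω)}
        = ⋃ c : {c : Fin (M+1) → ℤ // ∀ i : Fin (M+1), N ≤ (i:ℕ) → s (c i)},
            cylSet c.1 := by
    intro s
    ext ω
    simp only [Set.mem_setOf_eq, Set.mem_iUnion]
    constructor
    · intro h
      refine ⟨⟨fun i => X i ω, fun i hi => h i hi (by omega)⟩, fun i => rfl⟩
    · rintro ⟨⟨c, hc⟩, hmem⟩ n hNn hnM
      have hm := hmem ⟨n, by omega⟩
      simp only at hm
      rw [hm]
      exact hc ⟨n, by omega⟩ hNn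
  have hdisj : ∀ (s : ℤ → Prop), Pairwise (Function.onFun Disjoint
      (fun c : {c : Fin (M+1) → ℤ // ∀ i : Fin (M+1), N ≤ (i:ℕ) → s (c i)} =>
        cylSet c.1)) := by
    intro s c d hcd
    have hne : c.1 ≠ d.1 := fun h => hcd (Subtype.ext h)
    obtain ⟨i, hi⟩ := Function.ne_iff.mp hne
    simp only [Function.onFun, Set.disjoint_left]
    intro ω hc hd
    exact hi ((hc i).symm.trans (hd i))
  rw [hdecomp (fun z => 1 ≤ z), hdecomp (fun z => z ≤ -1)]
  rw [measure_iUnion (hdisj (fun z => 1 ≤ z)) (fun c => hcylMeas c.1)]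
  rw [measure_iUnion (hdisj (fun z => z ≤ -1)) (fun c => hcylMeas c.1)]
  let e : {c : Fin (M+1) → ℤ // ∀ i : Fin (M+1), N ≤ (i:ℕ) → 1 ≤ c i}
      ≃ {c : Fin (M+1) → ℤ // ∀ i : Fin (M+1), N ≤ (i:ℕ) → c i ≤ -1} :=
    { toFun := fun c => ⟨fun i => -(c.1 i), fun i hi => by
        have := c.2 i hi; show -(c.1 i) ≤ -1; omega⟩
      invFun := fun d => ⟨fun i => -(d.1 i), fun i hi => by
        have := d.2 i hi; show 1 ≤ -(d.1 i); omega⟩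
      left_inv := fun c => Subtype.ext (funext (fun i => neg_neg _))
      right_inv := fun d => Subtype.ext (funext (fun i => neg_neg _)) }
  rw [← e.tsum_eq (fun d => P (cylSet d.1))]
  exact tsum_congr (fun c => hcs c.1)

omit [IsProbabilityMeasure P] hstep hMarkov in
include hXmeas in
lemma eventMeas (s : ℤ → Prop) (N M : ℕ) :
    MeasurableSet {ω : Ω | ∀ n, N ≤ n → n ≤ M → s (X n ω)} := by
  have hrep : {ω : Ω | ∀ n, N ≤ n → n ≤ M → s (X n ω)}
      = ⋂ n : ℕ, {ω : Ω | N ≤ n → n ≤ M → s (X n ω)} := by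
    ext ω; simp [Set.mem_iInter]
  rw [hrep]
  refine MeasurableSet.iInter (fun n => ?_)
  by_cases h : N ≤ n ∧ n ≤ M
  · have : {ω : Ω | N ≤ n → n ≤ M → s (X n ω)} = (X n) ⁻¹' {z | s z} := by
      ext ω; simp [h.1, h.2]
    rw [this]
    exact hXmeas n MeasurableSet.of_discrete
  · have : {ω : Ω | N ≤ n → n ≤ M → s (X n ω)} = Set.univ := by
      ext ω; simp only [Set.mem_setOf_eq, Set.mem_univ, iff_true]
      intro h1 h2; exact absurd ⟨h1, h2⟩ h
    rw [this]
    exact MeasurableSet.univ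

include hXmeas hstep hMarkov in
lemma splus_symm (hX0 : ∀ ω, X 0 ω = 0) :
    P {ω | ∃ N, ∀ n, N ≤ n → 1 ≤ X n ω} = P {ω | ∃ N, ∀ n, N ≤ n → X n ω ≤ -1} := by
  have hTset : ∀ (s : ℤ → Prop) (N : ℕ), {ω : Ω | ∀ n, N ≤ n → s (X n ω)}
      = ⋂ M : ℕ, {ω : Ω | ∀ n, N ≤ n → n ≤ M → s (X n ω)} := by
    intro s N
    ext ω
    simp only [Set.mem_setOf_eq, Set.mem_iInter]
    constructor
    · intro h M n hNn _; exact h n hNn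
    · intro h n hNn; exact h n n hNn le_rfl
  have hSset : ∀ (s : ℤ → Prop), {ω : Ω | ∃ N, ∀ n, N ≤ n → s (X n ω)}
      = ⋃ N : ℕ, {ω : Ω | ∀ n, N ≤ n → s (X n ω)} := by
    intro s; ext ω; simp [Set.mem_iUnion]
  have hT : ∀ N : ℕ, P {ω : Ω | ∀ n, N ≤ n → 1 ≤ X n ω}
      = P {ω : Ω | ∀ n, N ≤ n → X n ω ≤ -1} := by
    intro N
    rw [hTset (fun z => 1 ≤ z) N, hTset (fun z => z ≤ -1) N]
    have hanti : ∀ s : ℤ → Prop, Directed (fun (x1 x2 : Set Ω) => x1 ⊇ x2)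
        (fun M => {ω : Ω | ∀ n, N ≤ n → n ≤ M → s (X n ω)}) := by
      intro s
      have : Antitone (fun M => {ω : Ω | ∀ n, N ≤ n → n ≤ M → s (X n ω)}) := by
        intro M M' hMM' ω h n hNn hnM
        exact h n hNn (le_trans hnM hMM')
      exact this.directed_ge
    rw [Directed.measure_iInter
      (fun M => (eventMeas X hXmeas (fun z => 1 ≤ z) N M).nullMeasurableSet)
      (hanti (fun z => 1 ≤ z)) ⟨0, measure_ne_top P _⟩]
    rw [Directed.measure_iInter
      (fun M => (eventMeas X hXmeas (fun z => z ≤ -1) N M).nullMeasurableSet)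
      (hanti (fun z => z ≤ -1)) ⟨0, measure_ne_top P _⟩]
    exact iInf_congr (fun M => event_symm P β X hXmeas hstep hMarkov hX0 N M)
  rw [hSset (fun z => 1 ≤ z), hSset (fun z => z ≤ -1)]
  have hmono : ∀ s : ℤ → Prop, Directed (fun (x1 x2 : Set Ω) => x1 ⊆ x2)
      (fun N => {ω : Ω | ∀ n, N ≤ n → s (X n ω)}) := by
    intro s
    have : Monotone (fun N => {ω : Ω | ∀ n, N ≤ n → s (X n ω)}) := by
      intro N N' hNN' ω h n hN'n
      exact h n (le_trans hNN' hN'n)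
    exact this.directed_le
  rw [Directed.measure_iUnion (hmono (fun z => 1 ≤ z))]
  rw [Directed.measure_iUnion (hmono (fun z => z ≤ -1))]
  exact iSup_congr hT

omit [IsProbabilityMeasure P] hstep hMarkov in
include hXmeas in
lemma tailMeas (s : ℤ → Prop) :
    MeasurableSet {ω : Ω | ∃ N, ∀ n, N ≤ n → s (X n ω)} := by
  have hrep : {ω : Ω | ∃ N, ∀ n, N ≤ n → s (X n ω)}
      = ⋃ N : ℕ, ⋂ n : ℕ, {ω : Ω | N ≤ n → s (X n ω)} := by
    ext ω; simp [Set.mem_iUnion, Set.mem_iInter]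
  rw [hrep]
  refine MeasurableSet.iUnion (fun N => MeasurableSet.iInter (fun n => ?_))
  by_cases h : N ≤ n
  · have : {ω : Ω | N ≤ n → s (X n ω)} = (X n) ⁻¹' {z | s z} := by ext ω; simp [h]
    rw [this]
    exact hXmeas n MeasurableSet.of_discrete
  · have : {ω : Ω | N ≤ n → s (X n ω)} = Set.univ := by
      ext ω; simp only [Set.mem_setOf_eq, Set.mem_univ, iff_true]
      intro h1; exact absurd h1 h
    rw [this]
    exact MeasurableSet.univ

end

theorem stmt9 {Ω : Type*} [MeasurableSpace Ω] (P : Measure Ω) [IsProbabilityMeasure P]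
    (β : ℝ) (hβ : 0 < β) (X : ℕ → Ω → ℤ)
    (hXmeas : ∀ n, Measurable (X n))
    (hX0 : ∀ ω, X 0 ω = 0)
    (hstep : ∀ n, ∀ᵐ ω ∂P, X (n+1) ω = X n ω + 1 ∨ X (n+1) ω = X n ω - 1)
    (hMarkov : ∀ (n : ℕ) (x : ℤ) (A : Set Ω),
      MeasurableSet[⨆ i : Fin (n+1), MeasurableSpace.comap (X i.val) inferInstance] A →
      A ⊆ {ω | X n ω = x} →
      P (A ∩ {ω | X (n+1) ω = x + 1}) = ENNReal.ofReal (pUp β x) * P A ∧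
      P (A ∩ {ω | X (n+1) ω = x - 1}) = ENNReal.ofReal (pDown β x) * P A) :
    ∃ Y : Ω → ℝ, Measurable Y ∧
      (∀ᵐ ω ∂P, Tendsto (fun n : ℕ => (X n ω : ℝ) / n) atTop (nhds (Y ω))) ∧
      P {ω | Y ω = (1 - Real.exp (-β)) / (1 + Real.exp (-β))} = 1/2 ∧
      P {ω | Y ω = -((1 - Real.exp (-β)) / (1 + Real.exp (-β)))} = 1/2 := by
  classical
  have hv0 : 0 < vel β := vel_pos hβ
  set Sp : Set Ω := {ω | ∃ N, ∀ n, N ≤ n → 1 ≤ X n ω} with hSp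
  set Sm : Set Ω := {ω | ∃ N, ∀ n, N ≤ n → X n ω ≤ -1} with hSm
  have hSpMeas : MeasurableSet Sp := tailMeas X hXmeas (fun z => 1 ≤ z)
  have hSmMeas : MeasurableSet Sm := tailMeas X hXmeas (fun z => z ≤ -1)
  have hdisj : Disjoint Sp Sm := by
    rw [Set.disjoint_left]
    rintro ω ⟨N1, h1⟩ ⟨N2, h2⟩
    have ha := h1 (max N1 N2) (le_max_left _ _)
    have hb := h2 (max N1 N2) (le_max_right _ _)
    omega
  set Y : Ω → ℝ := fun ω => if ω ∈ Sp then vel β else -(vel β) with hY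
  have hYmeas : Measurable Y := Measurable.ite hSpMeas measurable_const measurable_const
  -- a.e. facts
  have habs := abs_tendsto P β X hXmeas hstep hMarkov hβ hX0
  have hstepall : ∀ᵐ ω ∂P, ∀ n, X (n+1) ω = X n ω + 1 ∨ X (n+1) ω = X n ω - 1 :=
    ae_all_iff.mpr hstep
  have hsign : ∀ᵐ ω ∂P, ω ∈ Sp ∪ Sm := by
    filter_upwards [habs, hstepall] with ω h1 h2
    have hev : ∀ᶠ n : ℕ in atTop, vel β / 2 < |(X n ω : ℝ)| / n :=
      h1.eventually (eventually_gt_nhds (by linarith))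
    obtain ⟨N, hN⟩ := eventually_atTop.mp hev
    set N0 := max N 1 with hN0
    have hne : ∀ n, N0 ≤ n → X n ω ≠ 0 := by
      intro n hn
      have hn1 : 1 ≤ n := le_trans (le_max_right _ _) hn
      have := hN n (le_trans (le_max_left _ _) hn)
      have hnp : (0:ℝ) < n := by exact_mod_cast hn1
      have habspos : 0 < |(X n ω : ℝ)| := by
        by_contra hcon
        push_neg at hcon
        have h0' : |(X n ω : ℝ)| = 0 := le_antisymm hcon (abs_nonneg _)
        rw [h0', zero_div] at this
        linarith
      have : (X n ω : ℝ) ≠ 0 := abs_pos.mp habspos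
      exact_mod_cast this
    have h0 := hne N0 le_rfl
    rcases lt_or_gt_of_ne h0 with hneg | hpos
    · right
      refine ⟨N0, fun n hn => ?_⟩
      induction n, hn using Nat.le_induction with
      | base => omega
      | succ m hm ih =>
          have := h2 m
          have := hne (m+1) (by omega)
          omega
    · left
      refine ⟨N0, fun n hn => ?_⟩
      induction n, hn using Nat.le_induction with
      | base => omega
      | succ m hm ih =>
          have := h2 m
          have := hne (m+1) (by omega)
          omega
  have hXtendsto : ∀ᵐ ω ∂P, Tendsto (fun n : ℕ => (X n ω : ℝ) / n) atTop (nhds (Y ω)) := by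
    filter_upwards [habs, hsign] with ω h1 hmem
    rcases hmem with hp | hm
    · have hYω : Y ω = vel β := by rw [hY]; simp only [if_pos hp]
      rw [hYω]
      obtain ⟨N, hN⟩ := hp
      refine h1.congr' ?_
      rw [eventuallyEq_iff_exists_mem]
      refine ⟨{n | N ≤ n}, mem_atTop N, fun n hn => ?_⟩
      have h1' : (1:ℤ) ≤ X n ω := hN n hn
      have h2' : (0:ℝ) ≤ (X n ω : ℝ) := by exact_mod_cast le_trans zero_le_one h1'
      show |(X n ω : ℝ)| / n = (X n ω : ℝ) / n
      rw [abs_of_nonneg h2']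
    · have hnp : ω ∉ Sp := by
        intro hp; exact (Set.disjoint_left.mp hdisj hp) hm
      have hYω : Y ω = -(vel β) := by rw [hY]; simp only [if_neg hnp]
      rw [hYω]
      obtain ⟨N, hN⟩ := hm
      have hneg := h1.neg
      refine hneg.congr' ?_
      rw [eventuallyEq_iff_exists_mem]
      refine ⟨{n | N ≤ n}, mem_atTop N, fun n hn => ?_⟩
      have h1' : X n ω ≤ -1 := hN n hn
      have h2' : (X n ω : ℝ) ≤ 0 := by
        have : X n ω ≤ 0 := le_trans h1' (by norm_num)
        exact_mod_cast this
      show -(|(X n ω : ℝ)| / n) = (X n ω : ℝ) / n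
      rw [abs_of_nonpos h2']
      ring
  -- measure computations
  have hsym : P Sp = P Sm := splus_symm P β X hXmeas hstep hMarkov hX0
  have hunion : P (Sp ∪ Sm) = 1 := by
    have hc : P (Sp ∪ Sm)ᶜ = 0 := by
      have := hsign
      rw [ae_iff] at this
      exact this
    have := measure_compl (hSpMeas.union hSmMeas) (measure_ne_top P _)
    rw [hc, measure_univ] at this
    have hle : P (Sp ∪ Sm) ≤ 1 := prob_le_one
    have hge : 1 ≤ P (Sp ∪ Sm) := by
      by_contra hcon
      push_neg at hcon
      rw [eq_comm, tsub_eq_zero_iff_le] at this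
      exact absurd this (not_le.mpr hcon)
    exact le_antisymm hle hge
  have hsum : P Sp + P Sm = 1 := by
    rw [← measure_union hdisj hSmMeas, hunion]
  have hhalf : P Sp = 1/2 := by
    rw [← hsym] at hsum
    have h2 : 2 * P Sp = 1 := by rw [two_mul]; exact hsum
    rw [ENNReal.eq_div_iff (by norm_num) (by norm_num)]
    exact h2
  have hSmhalf : P Sm = 1/2 := by rw [← hsym, hhalf]
  refine ⟨Y, hYmeas, hXtendsto, ?_, ?_⟩
  · have hset : {ω | Y ω = (1 - Real.exp (-β)) / (1 + Real.exp (-β))} = Sp := by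
      ext ω
      simp only [Set.mem_setOf_eq, hY]
      by_cases h : ω ∈ Sp
      · simp only [if_pos h]
        exact ⟨fun _ => h, fun _ => rfl⟩
      · simp only [if_neg h]
        constructor
        · intro heq
          exfalso
          have : -(vel β) = vel β := heq
          linarith
        · intro hcon; exact absurd hcon h
    rw [hset, hhalf]
  · have hset : {ω | Y ω = -((1 - Real.exp (-β)) / (1 + Real.exp (-β)))} = Spᶜ := by
      ext ω
      simp only [Set.mem_setOf_eq, hY, Set.mem_compl_iff]
      by_cases h : ω ∈ Sp
      · simp only [if_pos h]
        constructor
        · intro heq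
          exfalso
          have : vel β = -(vel β) := heq
          linarith
        · intro hcon; exact absurd h hcon
      · simp only [if_neg h]
        exact ⟨fun _ => h, fun _ => rfl⟩
    rw [hset, measure_compl hSpMeas (measure_ne_top P _), measure_univ, hhalf]
    rw [one_div, ENNReal.one_sub_inv_two]
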